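/- arXiv:1905.08872 — 4 statements merged into one kernel-verified Lean document; each statement's English description precedes it below -/
import Mathlib

section
/- For all real numbers a, b > 0, we have ((1 - e^{-a})(1 - e^{-b}))/(1 - e^{-(a+b)}) < ab/(a+b). -/
private lemma keyF (x : ℝ) (hx : 0 < x) : (2 - x) * Real.exp x < 2 + x := by
  set F : ℝ → ℝ := fun t => 1 + t - (1 - t) * Real.exp (2 * t) with hF
  have hderiv : ∀ t : ℝ, HasDerivAt F (1 - (1 - 2*t) * Real.exp (2*t)) t := by
    intro t
    have h1 : HasDerivAt (fun t : ℝ => Real.exp (2 * t)) (Real.exp (2*t) * 2) t := by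
      simpa using ((hasDerivAt_id t).const_mul 2).exp
    have h2 : HasDerivAt (fun t : ℝ => (1 - t) * Real.exp (2 * t))
        ((-1) * Real.exp (2*t) + (1 - t) * (Real.exp (2*t) * 2)) t :=
      (((hasDerivAt_id t).const_sub 1)).mul h1
    have h3 : HasDerivAt (fun t : ℝ => 1 + t) 1 t := by
      simpa using (hasDerivAt_id t).const_add 1
    have := h3.sub h2
    exact this.congr_deriv (by ring)
  have hmono : StrictMonoOn F (Set.Ici 0) := by
    apply strictMonoOn_of_deriv_pos (convex_Ici 0)
    · exact (Continuous.sub (by continuity) (by continuity)).continuousOn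
    · intro t ht
      rw [interior_Ici] at ht
      rw [(hderiv t).deriv]
      rcases le_or_gt (1 - 2*t) 0 with h | h
      · have : (1 - 2*t) * Real.exp (2*t) ≤ 0 :=
          mul_nonpos_of_nonpos_of_nonneg h (Real.exp_pos _).le
        linarith
      · have h4 : (-(2*t)) + 1 < Real.exp (-(2*t)) :=
          Real.add_one_lt_exp (ne_of_lt (by nlinarith [ht.out] : -(2*t) < 0))
        have h5 : (1 - 2*t) * Real.exp (2*t) < Real.exp (-(2*t)) * Real.exp (2*t) := by
          apply mul_lt_mul_of_pos_right _ (Real.exp_pos _)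
          linarith
        rw [← Real.exp_add] at h5
        simp at h5
        linarith
  have h0 : F 0 < F (x / 2) :=
    hmono Set.self_mem_Ici (Set.mem_Ici.mpr (by positivity)) (by positivity)
  simp only [hF] at h0
  rw [show 2 * (x/2) = x by ring] at h0
  simp [Real.exp_zero] at h0
  nlinarith [h0]

private lemma key2 (x : ℝ) (hx : 0 < x) : 2 - x < (2 + x) * Real.exp (-x) := by
  have h := keyF x hx
  have he : Real.exp (-x) * Real.exp x = 1 := by rw [← Real.exp_add]; simp
  nlinarith [Real.exp_pos (-x), Real.exp_pos x]

theorem stmt_0 (a b : ℝ) (ha : 0 < a) (hb : 0 < b) :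
    (1 - Real.exp (-a)) * (1 - Real.exp (-b)) / (1 - Real.exp (-(a + b)))
      < a * b / (a + b) := by
  have hea : Real.exp (-a) < 1 := Real.exp_lt_one_iff.mpr (by linarith)
  have heb : Real.exp (-b) < 1 := Real.exp_lt_one_iff.mpr (by linarith)
  have heab : Real.exp (-(a+b)) = Real.exp (-a) * Real.exp (-b) := by
    rw [← Real.exp_add]; ring_nf
  set u := 1 - Real.exp (-a) with hu
  set v := 1 - Real.exp (-b) with hv
  have hu0 : 0 < u := by simp [hu]; linarith
  have hv0 : 0 < v := by simp [hv]; linarith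
  have hu1 : u < 1 := by have := Real.exp_pos (-a); simp [hu]; linarith
  have hv1 : v < 1 := by have := Real.exp_pos (-b); simp [hv]; linarith
  have ka : 2*a - 2*u - a*u > 0 := by
    have := key2 a ha
    rw [show Real.exp (-a) = 1 - u by rw [hu]; ring] at this
    nlinarith
  have kb : 2*b - 2*v - b*v > 0 := by
    have := key2 b hb
    rw [show Real.exp (-b) = 1 - v by rw [hv]; ring] at this
    nlinarith
  have hden : (0:ℝ) < 1 - Real.exp (-(a+b)) := by
    rw [heab]
    nlinarith [Real.exp_pos (-a), Real.exp_pos (-b)]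
  rw [div_lt_div_iff₀ hden (by linarith : (0:ℝ) < a + b)]
  rw [heab, show Real.exp (-a) = 1 - u by rw [hu]; ring,
      show Real.exp (-b) = 1 - v by rw [hv]; ring]
  nlinarith [mul_pos ka (mul_pos hb hv0), mul_pos kb (mul_pos ha hu0)]
end

section
/- Define f(a,b) := (1 - e^{-(a+b)})/((1 - e^{-a})(1 - e^{-b})) − 1/a − 1/b for a, b > 0. Then the partial derivative of f with respect to a is 1/a² + 1/(2 − 2·cosh(a)), and this quantity is strictly positive for all a > 0. -/
theorem stmt_2 (a b : ℝ) (ha : 0 < a) (hb : 0 < b) :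
    HasDerivAt
      (fun s : ℝ =>
        (1 - Real.exp (-(s + b))) / ((1 - Real.exp (-s)) * (1 - Real.exp (-b)))
          - 1 / s - 1 / b)
      (1 / a ^ 2 + 1 / (2 - 2 * Real.cosh a)) a ∧
    0 < 1 / a ^ 2 + 1 / (2 - 2 * Real.cosh a) := by
  have hea : Real.exp (-a) < 1 := by
    rw [Real.exp_lt_one_iff]; linarith
  have heb : Real.exp (-b) < 1 := by
    rw [Real.exp_lt_one_iff]; linarith
  have hda : (1 : ℝ) - Real.exp (-a) ≠ 0 := by linarith
  have hdb : (1 : ℝ) - Real.exp (-b) ≠ 0 := by linarith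
  have hcosh : 1 < Real.cosh a := Real.one_lt_cosh.2 ha.ne'
  have hc : 2 - 2 * Real.cosh a ≠ 0 := by linarith
  -- key: 2 * cosh a - 2 > a ^ 2
  have hsinh : a / 2 < Real.sinh (a / 2) := Real.self_lt_sinh_iff.2 (by positivity)
  have hsinh0 : 0 < Real.sinh (a / 2) := lt_trans (by positivity) hsinh
  have hkey : a ^ 2 < 2 * Real.cosh a - 2 := by
    have h1 : Real.cosh a = 2 * Real.sinh (a / 2) ^ 2 + 1 := by
      have := Real.cosh_sq (a / 2)
      have h2 := Real.cosh_two_mul (a / 2)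
      rw [show 2 * (a / 2) = a by ring] at h2
      linarith
    have hsq : (a / 2) ^ 2 < Real.sinh (a / 2) ^ 2 := by
      apply pow_lt_pow_left₀ hsinh (by positivity)
      norm_num
    nlinarith
  constructor
  · have h1 : HasDerivAt (fun s : ℝ => 1 - Real.exp (-(s + b)))
        (Real.exp (-(a + b))) a := by
      have : HasDerivAt (fun s : ℝ => Real.exp (-(s + b)))
          (Real.exp (-(a + b)) * (-1)) a := by
        apply HasDerivAt.exp
        have : HasDerivAt (fun s : ℝ => -(s + b)) (-1) a := by
          exact ((hasDerivAt_id a).add_const b).neg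
        exact this
      simpa using (this.const_sub 1)
    have h2 : HasDerivAt (fun s : ℝ => (1 - Real.exp (-s)) * (1 - Real.exp (-b)))
        (Real.exp (-a) * (1 - Real.exp (-b))) a := by
      have hexp : HasDerivAt (fun s : ℝ => Real.exp (-s)) (-Real.exp (-a)) a := by
        have h := (hasDerivAt_neg a).exp; rw [mul_neg_one] at h; exact h
      simpa using ((hexp.const_sub 1).mul_const (1 - Real.exp (-b)))
    have hD : (1 - Real.exp (-a)) * (1 - Real.exp (-b)) ≠ 0 := mul_ne_zero hda hdb
    have hq := h1.div h2 hD
    have h3 : HasDerivAt (fun s : ℝ => 1 / s) (-(1 / a ^ 2)) a := by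
      simpa [one_div] using hasDerivAt_inv ha.ne'
    have := (hq.sub h3).sub_const (1 / b)
    convert this using 1
    case e'_4 => rfl
    case e'_5 => rfl
    case e'_8 => rfl
    have h2a : Real.exp (-(a + b)) = Real.exp (-a) * Real.exp (-b) := by
      rw [← Real.exp_add]; ring_nf
    have he : Real.exp a = (Real.exp (-a))⁻¹ := by
      rw [Real.exp_neg, inv_inv]
    have hcc : 2 - 2 * (((Real.exp (-a))⁻¹ + Real.exp (-a)) / 2) ≠ 0 := by
      rw [← he, ← Real.cosh_eq]; exact hc
    rw [Real.cosh_eq, he, h2a]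
    have hx0 : Real.exp (-a) ≠ 0 := (Real.exp_pos _).ne'
    generalize Real.exp (-a) = x at hda hcc hx0 ⊢
    generalize Real.exp (-b) = y at hdb ⊢
    have ha0 : a ≠ 0 := ha.ne'
    have hkey2 : 2 - 2 * ((x⁻¹ + x) / 2) = -((1 - x) ^ 2) / x := by
      field_simp; ring
    rw [hkey2]
    have hnz : -((1 - x) ^ 2) / x ≠ 0 :=
      div_ne_zero (neg_ne_zero.2 (pow_ne_zero 2 hda)) hx0
    field_simp
    ring
  · have ha2 : (0:ℝ) < a ^ 2 := by positivity
    have : 1 / (2 * Real.cosh a - 2) < 1 / a ^ 2 :=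
      one_div_lt_one_div_of_lt ha2 hkey
    have hrw : 1 / (2 - 2 * Real.cosh a) = -(1 / (2 * Real.cosh a - 2)) := by
      rw [← one_div_neg_eq_neg_one_div]; ring_nf
    rw [hrw]
    linarith
end

section
/- Consider two scalar systems ẋᵢ = aᵢ − bᵢ·xᵢ with bᵢ > 0 (i = 1,2), and suppose there exist reals v, w and times t₁, t₂ > 0 such that the solution of the first system starting at v reaches w at time t₁, and the solution of the second system starting at w reaches v at time t₂. Then w − v = (c₁ − c₂)·((1 − e^{−b₁t₁})(1 − e^{−b₂t₂}))/(1 − e^{−b₁t₁ − b₂t₂}), where cᵢ := aᵢ/bᵢ. -/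
lemma ode_sol (a b : ℝ) (hb : b ≠ 0) (x : ℝ → ℝ)
    (hx : ∀ t, HasDerivAt x (a - b * x t) t) (t : ℝ) :
    x t = Real.exp (-b * t) * x 0 + (a / b) * (1 - Real.exp (-b * t)) := by
  set g : ℝ → ℝ := fun s => Real.exp (b * s) * (x s - a / b) with hg
  have key : ∀ s : ℝ, HasDerivAt g 0 s := by
    intro s
    have h1 : HasDerivAt (fun s : ℝ => Real.exp (b * s)) (Real.exp (b * s) * b) s := by
      simpa [Function.comp_def] using (Real.hasDerivAt_exp (b * s)).comp s ((hasDerivAt_id s).const_mul b)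
    have h2 := h1.mul ((hx s).sub_const (a / b))
    refine h2.congr_deriv ?_
    field_simp
    ring
  have hconst : g t = g 0 := by
    have hd : Differentiable ℝ g := fun s => (key s).differentiableAt
    have hz : ∀ s, deriv g s = 0 := fun s => (key s).deriv
    exact is_const_of_deriv_eq_zero hd hz t 0
  have hg0 : Real.exp (b * t) * (x t - a / b) = x 0 - a / b := by
    simpa [hg] using hconst
  have he : Real.exp (b * t) ≠ 0 := Real.exp_ne_zero _
  have hexp : Real.exp (-b * t) = (Real.exp (b * t))⁻¹ := by
    rw [← Real.exp_neg]; ring_nf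
  field_simp at hg0
  rw [hexp]
  field_simp
  linear_combination hg0

theorem stmt_5 (a₁ a₂ b₁ b₂ v w t₁ t₂ : ℝ)
    (hb₁ : 0 < b₁) (hb₂ : 0 < b₂) (ht₁ : 0 < t₁) (ht₂ : 0 < t₂)
    (x₁ x₂ : ℝ → ℝ)
    (hx₁ : ∀ t, HasDerivAt x₁ (a₁ - b₁ * x₁ t) t)
    (hx₂ : ∀ t, HasDerivAt x₂ (a₂ - b₂ * x₂ t) t)
    (h₁0 : x₁ 0 = v) (h₁1 : x₁ t₁ = w)
    (h₂0 : x₂ 0 = w) (h₂1 : x₂ t₂ = v) :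
    w - v = (a₁ / b₁ - a₂ / b₂) *
      ((1 - Real.exp (-b₁ * t₁)) * (1 - Real.exp (-b₂ * t₂))) /
        (1 - Real.exp (-b₁ * t₁ - b₂ * t₂)) := by
  have e₁ := ode_sol a₁ b₁ hb₁.ne' x₁ hx₁ t₁
  have e₂ := ode_sol a₂ b₂ hb₂.ne' x₂ hx₂ t₂
  rw [h₁0, h₁1] at e₁
  rw [h₂0, h₂1] at e₂
  set E₁ := Real.exp (-b₁ * t₁) with hE₁
  set E₂ := Real.exp (-b₂ * t₂) with hE₂
  have hE₁lt : E₁ < 1 := by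
    rw [hE₁]
    apply Real.exp_lt_one_iff.mpr
    nlinarith
  have hE₂lt : E₂ < 1 := by
    rw [hE₂]
    apply Real.exp_lt_one_iff.mpr
    nlinarith
  have hE₁pos : 0 < E₁ := Real.exp_pos _
  have hE₂pos : 0 < E₂ := Real.exp_pos _
  have hprod : Real.exp (-b₁ * t₁ - b₂ * t₂) = E₁ * E₂ := by
    rw [hE₁, hE₂, ← Real.exp_add]; ring_nf
  rw [hprod]
  have hden : 1 - E₁ * E₂ ≠ 0 := by nlinarith
  field_simp at e₁ e₂ ⊢
  linear_combination (b₂ * (1 - E₂)) * e₁ - (b₁ * (1 - E₁)) * e₂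
end

section
/- With the setting of the previous two-system loop (ẋᵢ = aᵢ − bᵢxᵢ, bᵢ > 0, solution from v reaches w in time t₁ under system 1, solution from w reaches v in time t₂ under system 2), if additionally c₁ > c₂ where cᵢ = aᵢ/bᵢ, then w − v < (c₁ − c₂)·(b₁t₁·b₂t₂)/(b₁t₁ + b₂t₂). -/
open Real Set

lemma sinh_lt_mul_cosh {u : ℝ} (hu : 0 < u) : Real.sinh u < u * Real.cosh u := by
  have h : StrictMonoOn (fun x : ℝ => x * Real.cosh x - Real.sinh x) (Set.Ici 0) := by
    apply strictMonoOn_of_deriv_pos (convex_Ici 0)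
    · exact ((continuous_id.mul Real.continuous_cosh).sub Real.continuous_sinh).continuousOn
    · intro x hx
      rw [interior_Ici, Set.mem_Ioi] at hx
      have hd : HasDerivAt (fun x : ℝ => x * Real.cosh x - Real.sinh x)
          ((1 * Real.cosh x + x * Real.sinh x) - Real.cosh x) x :=
        ((hasDerivAt_id x).mul (Real.hasDerivAt_cosh x)).sub (Real.hasDerivAt_sinh x)
      rw [hd.deriv]
      have := Real.sinh_pos_iff.2 hx
      nlinarith
  have := h (Set.self_mem_Ici) (Set.mem_Ici.2 hu.le) hu
  simpa using this

lemma key_exp_ineq {s : ℝ} (hs : 0 < s) : 2 * (Real.exp s - 1) < s * (Real.exp s + 1) := by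
  have h := sinh_lt_mul_cosh (u := s / 2) (by linarith)
  rw [Real.sinh_eq, Real.cosh_eq] at h
  have e1 : Real.exp (s / 2) * Real.exp (s / 2) = Real.exp s := by
    rw [← Real.exp_add]; ring_nf
  have e2 : Real.exp (s / 2) * Real.exp (-(s / 2)) = 1 := by
    rw [← Real.exp_add]; simp
  have hp : 0 < Real.exp (s / 2) := Real.exp_pos _
  nlinarith [mul_lt_mul_of_pos_left h hp]

theorem stmt_6 (a₁ a₂ b₁ b₂ v w t₁ t₂ : ℝ)
    (hb₁ : 0 < b₁) (hb₂ : 0 < b₂) (ht₁ : 0 < t₁) (ht₂ : 0 < t₂)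
    (hc : a₁ / b₁ > a₂ / b₂)
    (x₁ x₂ : ℝ → ℝ)
    (hx₁ : ∀ t, HasDerivAt x₁ (a₁ - b₁ * x₁ t) t)
    (hx₂ : ∀ t, HasDerivAt x₂ (a₂ - b₂ * x₂ t) t)
    (h₁0 : x₁ 0 = v) (h₁1 : x₁ t₁ = w)
    (h₂0 : x₂ 0 = w) (h₂1 : x₂ t₂ = v) :
    w - v < (a₁ / b₁ - a₂ / b₂) * (b₁ * t₁ * (b₂ * t₂)) / (b₁ * t₁ + b₂ * t₂) := by
  have solve : ∀ (a b : ℝ), 0 < b → ∀ (x : ℝ → ℝ),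
      (∀ t, HasDerivAt x (a - b * x t) t) → ∀ T,
      (x T - a / b) * Real.exp (b * T) = x 0 - a / b := by
    intro a b hb x hx T
    have hg : ∀ t, HasDerivAt (fun t => (x t - a / b) * Real.exp (b * t)) 0 t := by
      intro t
      have h1 : HasDerivAt (fun t => x t - a / b) (a - b * x t) t := (hx t).sub_const _
      have h2 : HasDerivAt (fun t => Real.exp (b * t)) (Real.exp (b * t) * b) t := by
        simpa [Function.comp_def] using (Real.hasDerivAt_exp (b * t)).comp t ((hasDerivAt_id t).const_mul b)
      have h3 := h1.mul h2
      refine h3.congr_deriv ?_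
      have hab : a / b * b = a := div_mul_cancel₀ a hb.ne'
      linear_combination (-Real.exp (b * t)) * hab
    have hconst := is_const_of_deriv_eq_zero (𝕜 := ℝ)
      (f := fun t => (x t - a / b) * Real.exp (b * t))
      (fun t => (hg t).differentiableAt) (fun t => (hg t).deriv) T 0
    simpa using hconst
  set c₁ := a₁ / b₁ with hc₁
  set c₂ := a₂ / b₂ with hc₂
  set s₁ := b₁ * t₁ with hs₁def
  set s₂ := b₂ * t₂ with hs₂def
  have hs₁ : 0 < s₁ := mul_pos hb₁ ht₁
  have hs₂ : 0 < s₂ := mul_pos hb₂ ht₂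
  set E₁ := Real.exp s₁ with hE₁def
  set E₂ := Real.exp s₂ with hE₂def
  have hE₁ : 1 < E₁ := Real.one_lt_exp_iff.2 hs₁
  have hE₂ : 1 < E₂ := Real.one_lt_exp_iff.2 hs₂
  have key₁ : (w - c₁) * E₁ = v - c₁ := by
    have := solve a₁ b₁ hb₁ x₁ hx₁ t₁
    rw [h₁0, h₁1] at this
    simpa [hc₁, hE₁def, hs₁def] using this
  have key₂ : (v - c₂) * E₂ = w - c₂ := by
    have := solve a₂ b₂ hb₂ x₂ hx₂ t₂
    rw [h₂0, h₂1] at this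
    simpa [hc₂, hE₂def, hs₂def] using this
  have hwv : (w - v) * (E₁ * E₂ - 1) = (c₁ - c₂) * (E₁ - 1) * (E₂ - 1) := by
    linear_combination (E₂ - 1) * key₁ + (1 - E₁) * key₂
  have hA : 2 * (E₁ - 1) < s₁ * (E₁ + 1) := key_exp_ineq hs₁
  have hB : 2 * (E₂ - 1) < s₂ * (E₂ + 1) := key_exp_ineq hs₂
  have target2 : (s₁ + s₂) * (E₁ - 1) * (E₂ - 1) < s₁ * s₂ * (E₁ * E₂ - 1) := by
    nlinarith [mul_pos (mul_pos hs₂ (sub_pos.2 hE₂)) (sub_pos.2 (by linarith : (2:ℝ) * (E₁ - 1) < s₁ * (E₁ + 1))),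
      mul_pos (mul_pos hs₁ (sub_pos.2 hE₁)) (sub_pos.2 (by linarith : (2:ℝ) * (E₂ - 1) < s₂ * (E₂ + 1)))]
  have hd : 0 < c₁ - c₂ := sub_pos.2 hc
  have hP : 0 < E₁ * E₂ - 1 := by nlinarith
  rw [lt_div_iff₀ (by positivity : (0:ℝ) < s₁ + s₂)]
  have h1 : (w - v) * (s₁ + s₂) * (E₁ * E₂ - 1) <
      (c₁ - c₂) * (s₁ * s₂) * (E₁ * E₂ - 1) := by
    calc (w - v) * (s₁ + s₂) * (E₁ * E₂ - 1)
        = (c₁ - c₂) * ((s₁ + s₂) * (E₁ - 1) * (E₂ - 1)) := by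
          linear_combination (s₁ + s₂) * hwv
      _ < (c₁ - c₂) * (s₁ * s₂ * (E₁ * E₂ - 1)) := by
          exact mul_lt_mul_of_pos_left target2 hd
      _ = (c₁ - c₂) * (s₁ * s₂) * (E₁ * E₂ - 1) := by ring
  exact lt_of_mul_lt_mul_right h1 hP.le
end
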